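/- (Conserved quantities along normal extremals.) Let α, β, γ ∈ ℝ and let u_A, u_B, u_C : ℝ → ℝ be differentiable functions satisfying u_A′ = u_B·u_C, u_B′ = −u_C, and u_C′ = α·u_A − β·u_B + γ·u_A·u_B − α·u_B². Then the functions t ↦ u_A(t) + (1/2)·u_B(t)² and t ↦ (γ/2)·u_A(t)² − α·u_A(t)·u_B(t) − (1/2)·u_C(t)² − β·u_A(t) are constant on ℝ. -/

import Mathlib

theorem stmt8 (α β γ : ℝ) (uA uB uC : ℝ → ℝ)
    (hA : ∀ t, HasDerivAt uA (uB t * uC t) t)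
    (hB : ∀ t, HasDerivAt uB (-uC t) t)
    (hC : ∀ t, HasDerivAt uC
      (α * uA t - β * uB t + γ * uA t * uB t - α * (uB t) ^ 2) t) :
    (∀ s t : ℝ, uA s + (1 / 2) * (uB s) ^ 2 = uA t + (1 / 2) * (uB t) ^ 2) ∧
    (∀ s t : ℝ,
      (γ / 2) * (uA s) ^ 2 - α * uA s * uB s - (1 / 2) * (uC s) ^ 2 - β * uA s
        = (γ / 2) * (uA t) ^ 2 - α * uA t * uB t - (1 / 2) * (uC t) ^ 2 - β * uA t) := by
  constructor
  · intro s t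
    have h1 : ∀ x, HasDerivAt (fun y => uA y + (1 / 2) * (uB y) ^ 2) 0 x := by
      intro x
      have := (hA x).add ((((hB x).fun_pow 2)).const_mul (1/2 : ℝ))
      exact this.congr_deriv (by norm_num; ring)
    have : ∀ x, deriv (fun y => uA y + (1 / 2) * (uB y) ^ 2) x = 0 :=
      fun x => (h1 x).deriv
    exact is_const_of_deriv_eq_zero (fun x => (h1 x).differentiableAt) this s t
  · intro s t
    have h1 : ∀ x, HasDerivAt (fun y =>
        (γ / 2) * (uA y) ^ 2 - α * uA y * uB y - (1 / 2) * (uC y) ^ 2 - β * uA y) 0 x := by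
      intro x
      have := ((((hA x).fun_pow 2).const_mul (γ/2 : ℝ)).sub
          ((((hA x).const_mul α).fun_mul (hB x)))).sub
          (((hC x).fun_pow 2).const_mul (1/2 : ℝ)) |>.sub ((hA x).const_mul β)
      exact this.congr_deriv (by norm_num; ring)
    exact is_const_of_deriv_eq_zero (fun x => (h1 x).differentiableAt)
      (fun x => (h1 x).deriv) s t
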